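/- The measure μ with density (1+xy)^(-2) is invariant under the simultaneous action (x,y) ↦ (M·x, (Mᵀ)⁻¹·y) for any M ∈ GL₂(ℝ): for a rectangle [x₁,x₂]×[y₁,y₂] with all corner values 1+x_iy_j > 0, μ(M·[x₁,x₂] × (Mᵀ)⁻¹·[y₁,y₂]) = μ([x₁,x₂]×[y₁,y₂]), provided the images are again rectangles with positive corner quantities. -/

import Mathlib

open Matrix

/-- Möbius action of a 2×2 real matrix on ℝ. -/
noncomputable def mob (M : Matrix (Fin 2) (Fin 2) ℝ) (x : ℝ) : ℝ :=
  (M 0 0 * x + M 0 1) / (M 1 0 * x + M 1 1)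

/-- The measure of the rectangle [x₁,x₂]×[y₁,y₂] with respect to the density (1+xy)⁻². -/
noncomputable def muRect (x₁ x₂ y₁ y₂ : ℝ) : ℝ :=
  Real.log ((1 + x₁ * y₁) * (1 + x₂ * y₂) / ((1 + x₁ * y₂) * (1 + x₂ * y₁)))

lemma inv_transpose_eq (M : Matrix (Fin 2) (Fin 2) ℝ) :
    (Mᵀ)⁻¹ = Ring.inverse M.det • !![M 1 1, -(M 1 0); -(M 0 1), M 0 0] := by
  rw [Matrix.inv_def, Matrix.det_transpose]
  congr 1
  rw [show Mᵀ = !![M 0 0, M 1 0; M 0 1, M 1 1] by ext i j; fin_cases i <;> fin_cases j <;> rfl,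
    Matrix.adjugate_fin_two]
  simp

lemma hE_of (M : Matrix (Fin 2) (Fin 2) ℝ) (hM : M.det ≠ 0) (y : ℝ)
    (he : (Mᵀ)⁻¹ 1 0 * y + (Mᵀ)⁻¹ 1 1 ≠ 0) : M 0 0 - M 0 1 * y ≠ 0 := by
  have e10 : (Mᵀ)⁻¹ 1 0 = M.det⁻¹ * -(M 0 1) := by
    rw [inv_transpose_eq]; simp [Ring.inverse_eq_inv']
  have e11 : (Mᵀ)⁻¹ 1 1 = M.det⁻¹ * M 0 0 := by
    rw [inv_transpose_eq]; simp [Ring.inverse_eq_inv']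
  rw [e10, e11] at he
  intro h
  exact he (by rw [show M 0 0 = M 0 1 * y by linarith]; ring)

lemma key (M : Matrix (Fin 2) (Fin 2) ℝ) (hM : M.det ≠ 0) (x y : ℝ)
    (hd : M 1 0 * x + M 1 1 ≠ 0) (he : (Mᵀ)⁻¹ 1 0 * y + (Mᵀ)⁻¹ 1 1 ≠ 0) :
    1 + mob M x * mob (Mᵀ)⁻¹ y
      = M.det * (1 + x * y) / ((M 1 0 * x + M 1 1) * (M 0 0 - M 0 1 * y)) := by
  have e00 : (Mᵀ)⁻¹ 0 0 = M.det⁻¹ * M 1 1 := by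
    rw [inv_transpose_eq]; simp [Ring.inverse_eq_inv']
  have e01 : (Mᵀ)⁻¹ 0 1 = M.det⁻¹ * -(M 1 0) := by
    rw [inv_transpose_eq]; simp [Ring.inverse_eq_inv']
  have e10 : (Mᵀ)⁻¹ 1 0 = M.det⁻¹ * -(M 0 1) := by
    rw [inv_transpose_eq]; simp [Ring.inverse_eq_inv']
  have e11 : (Mᵀ)⁻¹ 1 1 = M.det⁻¹ * M 0 0 := by
    rw [inv_transpose_eq]; simp [Ring.inverse_eq_inv']
  have hE : M 0 0 - M 0 1 * y ≠ 0 := hE_of M hM y he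
  have hmob : mob (Mᵀ)⁻¹ y = (M 1 1 * y - M 1 0) / (M 0 0 - M 0 1 * y) := by
    rw [mob, e00, e01, e10, e11,
      show M.det⁻¹ * M 1 1 * y + M.det⁻¹ * -(M 1 0) = M.det⁻¹ * (M 1 1 * y - M 1 0) by ring,
      show M.det⁻¹ * -(M 0 1) * y + M.det⁻¹ * M 0 0 = M.det⁻¹ * (M 0 0 - M 0 1 * y) by ring,
      mul_div_mul_left _ _ (inv_ne_zero hM)]
  rw [hmob, mob, Matrix.det_fin_two]
  rw [div_mul_div_comm, one_add_div (mul_ne_zero hd hE)]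
  congr 1
  ring

/-- Invariance of the measure with density (1+xy)⁻² under the simultaneous action
(x,y) ↦ (M·x, (Mᵀ)⁻¹·y) for M ∈ GL₂(ℝ): the measure of the image rectangle (with
corners the images of the original corners, all corner quantities positive) equals
the measure of the original rectangle. -/
theorem mu_invariant (M : Matrix (Fin 2) (Fin 2) ℝ) (hM : M.det ≠ 0)
    (x₁ x₂ y₁ y₂ : ℝ) (hx : x₁ ≤ x₂) (hy : y₁ ≤ y₂)
    (h11 : 0 < 1 + x₁ * y₁) (h12 : 0 < 1 + x₁ * y₂)
    (h21 : 0 < 1 + x₂ * y₁) (h22 : 0 < 1 + x₂ * y₂)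
    (hd1 : M 1 0 * x₁ + M 1 1 ≠ 0) (hd2 : M 1 0 * x₂ + M 1 1 ≠ 0)
    (he1 : (Mᵀ)⁻¹ 1 0 * y₁ + (Mᵀ)⁻¹ 1 1 ≠ 0) (he2 : (Mᵀ)⁻¹ 1 0 * y₂ + (Mᵀ)⁻¹ 1 1 ≠ 0)
    (H11 : 0 < 1 + mob M x₁ * mob (Mᵀ)⁻¹ y₁) (H12 : 0 < 1 + mob M x₁ * mob (Mᵀ)⁻¹ y₂)
    (H21 : 0 < 1 + mob M x₂ * mob (Mᵀ)⁻¹ y₁) (H22 : 0 < 1 + mob M x₂ * mob (Mᵀ)⁻¹ y₂) :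
    muRect (mob M x₁) (mob M x₂) (mob (Mᵀ)⁻¹ y₁) (mob (Mᵀ)⁻¹ y₂)
      = muRect x₁ x₂ y₁ y₂ := by
  have hE1 := hE_of M hM y₁ he1
  have hE2 := hE_of M hM y₂ he2
  unfold muRect
  congr 1
  rw [key M hM x₁ y₁ hd1 he1, key M hM x₂ y₂ hd2 he2,
    key M hM x₁ y₂ hd1 he2, key M hM x₂ y₁ hd2 he1]
  rw [div_mul_div_comm, div_mul_div_comm, div_div_div_eq, div_eq_div_iff
    (by have := h12.ne'; have := h21.ne'; positivity) (by positivity)]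
  ring
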